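/- If G is a unicyclic graph (a connected graph with exactly one cycle) with maximum degree Δ, then χ'_s(G) ≤ ⌊3Δ/2⌋ + 1. -/

import Mathlib

set_option linter.unusedSectionVars false
set_option linter.unusedVariables false
set_option maxHeartbeats 1000000


open SimpleGraph Finset

/-- A star edge coloring: a proper edge coloring with no bi-colored path or
cycle on four edges. -/
def IsStarEdgeColoring {V : Type*} (G : SimpleGraph V) (c : Sym2 V → ℕ) : Prop :=
  (∀ ⦃u v w : V⦄, G.Adj u v → G.Adj u w → v ≠ w → c s(u, v) ≠ c s(u, w)) ∧
  (∀ v₀ v₁ v₂ v₃ v₄ : V, G.Adj v₀ v₁ → G.Adj v₁ v₂ → G.Adj v₂ v₃ → G.Adj v₃ v₄ →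
    v₀ ≠ v₁ → v₀ ≠ v₂ → v₀ ≠ v₃ → v₁ ≠ v₂ → v₁ ≠ v₃ → v₂ ≠ v₃ →
    v₄ ≠ v₁ → v₄ ≠ v₂ → v₄ ≠ v₃ →
    ¬(c s(v₀, v₁) = c s(v₂, v₃) ∧ c s(v₁, v₂) = c s(v₃, v₄)))

/-- `G` has a star edge coloring using colors `0, …, k-1`. -/
def StarColorable {V : Type*} (G : SimpleGraph V) (k : ℕ) : Prop :=
  ∃ c : Sym2 V → ℕ, (∀ ⦃u v : V⦄, G.Adj u v → c s(u, v) < k) ∧ IsStarEdgeColoring G c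

/-- The star chromatic index of `G`. -/
noncomputable def starChromaticIndex {V : Type*} (G : SimpleGraph V) : ℕ :=
  sInf {k | StarColorable G k}

/-- A cactus: every edge belongs to at most one cycle, i.e. any two cycles
through a common edge have the same edge set. -/
def IsCactus {V : Type*} (G : SimpleGraph V) : Prop :=
  ∀ ⦃u w : V⦄ (p : G.Walk u u) (q : G.Walk w w), p.IsCycle → q.IsCycle →
    ∀ e : Sym2 V, e ∈ p.edges → e ∈ q.edges →
      {e' | e' ∈ p.edges} = {e' | e' ∈ q.edges}

/-- A unicyclic graph: connected, with exactly one cycle. -/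
def IsUnicyclic {V : Type*} (G : SimpleGraph V) : Prop :=
  G.Connected ∧ (∃ (v : V) (p : G.Walk v v), p.IsCycle) ∧
    ∀ ⦃u w : V⦄ (p : G.Walk u u) (q : G.Walk w w), p.IsCycle → q.IsCycle →
      {e | e ∈ p.edges} = {e | e ∈ q.edges}




section WalkAux
namespace SimpleGraph.Walk
variable {V : Type*} {G : SimpleGraph V} {u v : V}

lemma edge_getVert_mem (p : G.Walk u v) {t : ℕ} (ht : t < p.length) :
    s(p.getVert t, p.getVert (t+1)) ∈ p.edges := by
  induction p generalizing t with
  | nil => simp at ht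
  | cons h q ih =>
    cases t with
    | zero => simp [getVert_zero, getVert_cons_succ]
    | succ t =>
      simp only [length_cons, Nat.succ_lt_succ_iff] at ht
      simp only [getVert_cons_succ, edges_cons, List.mem_cons]
      exact Or.inr (ih ht)

lemma mem_edges_iff_getVert (p : G.Walk u v) {e : Sym2 V} :
    e ∈ p.edges ↔ ∃ t, t < p.length ∧ e = s(p.getVert t, p.getVert (t+1)) := by
  constructor
  · intro he
    induction p with
    | nil => simp at he
    | cons h q ih =>
      simp only [edges_cons, List.mem_cons] at he
      rcases he with rfl | he
      · exact ⟨0, by simp [getVert_zero, getVert_cons_succ]⟩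
      · obtain ⟨t, ht, rfl⟩ := ih he
        exact ⟨t+1, by simpa using ht, by simp [getVert_cons_succ]⟩
  · rintro ⟨t, ht, rfl⟩; exact p.edge_getVert_mem ht

lemma getVert_eq_support_getD (p : G.Walk u v) (t : ℕ) (ht : t ≤ p.length) (d : V) :
    p.getVert t = p.support.getD t d := by
  induction p generalizing t with
  | nil =>
    simp only [length_nil, Nat.le_zero] at ht
    subst ht
    simp
  | cons h q ih =>
    cases t with
    | zero => simp [getVert_zero]
    | succ t =>
      simp only [length_cons, Nat.succ_le_succ_iff] at ht
      simpa [getVert_cons_succ] using ih t ht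

lemma IsCycle.getVert_injOn'' {p : G.Walk u u} (hp : p.IsCycle) {s t : ℕ}
    (hs : s < p.length) (ht : t < p.length) (h : p.getVert s = p.getVert t) : s = t := by
  have hnd := hp.support_nodup
  have hsup : p.support = u :: p.support.tail := p.support_eq_cons
  have hlen : p.support.tail.length = p.length := by
    have h1 := p.length_support
    conv_lhs at h1 => rw [hsup]
    simp only [List.length_cons] at h1
    omega
  have key : ∀ r : ℕ, r + 1 ≤ p.length → ∀ (hr : r < p.support.tail.length),
      p.getVert (r+1) = p.support.tail[r] := by
    intro r hr hr'
    have h2 := p.getVert_eq_support_getD (r+1) hr u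
    conv_rhs at h2 => rw [hsup]
    rw [h2]
    have hr2 : r + 1 < (u :: p.support.tail).length := by simp; omega
    rw [List.getD_eq_getElem _ _ hr2]
    simp
  have hu : ∀ r : ℕ, r < p.length → p.getVert r = u → r = 0 := by
    intro r hr hru
    by_contra h0
    have hr1 : r - 1 < p.support.tail.length := by omega
    have hlast : p.length - 1 < p.support.tail.length := by omega
    have e1 : p.support.tail[r-1] = u := by
      rw [← key (r-1) (by omega) hr1]
      rwa [Nat.sub_add_cancel (by omega)]
    have e2 : p.support.tail[p.length - 1] = u := by
      rw [← key (p.length - 1) (by omega) hlast]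
      rw [Nat.sub_add_cancel (by omega)]
      exact p.getVert_length
    have := hnd.getElem_inj_iff.mp (e1.trans e2.symm)
    omega
  rcases Nat.eq_zero_or_pos s with rfl | hs0
  · rw [p.getVert_zero] at h
    exact (hu t ht h.symm).symm
  rcases Nat.eq_zero_or_pos t with rfl | ht0
  · rw [p.getVert_zero] at h
    exact (hu s hs h)
  have hs1 : s - 1 < p.support.tail.length := by omega
  have ht1 : t - 1 < p.support.tail.length := by omega
  have e1 : p.support.tail[s-1] = p.support.tail[t-1] := by
    rw [← key (s-1) (by omega) hs1, ← key (t-1) (by omega) ht1,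
      Nat.sub_add_cancel (by omega), Nat.sub_add_cancel (by omega)]
    exact h
  have := hnd.getElem_inj_iff.mp e1
  omega

end SimpleGraph.Walk
end WalkAux


/-- Structural data for a unicyclic graph. -/
structure USetup {V : Type*} (G : SimpleGraph V) where
  n : ℕ
  hn : 3 ≤ n
  f : ZMod n → V
  d : V → ℕ
  par : V → V
  idx : V → ZMod n
  finj : Function.Injective f
  hadj : ∀ i, G.Adj (f i) (f (i+1))
  hd0 : ∀ v, d v = 0 ↔ ∃ i, f i = v
  hidx : ∀ v, d v = 0 → f (idx v) = v
  hpadj : ∀ v, 1 ≤ d v → G.Adj v (par v)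
  hpd : ∀ v, 1 ≤ d v → d (par v) + 1 = d v
  hclass : ∀ a b, G.Adj a b →
    (∃ i, a = f i ∧ b = f (i+1)) ∨ (∃ i, b = f i ∧ a = f (i+1)) ∨
    (1 ≤ d a ∧ par a = b) ∨ (1 ≤ d b ∧ par b = a)

lemma exists_usetup {V : Type*} [Fintype V] (G : SimpleGraph V) (hG : IsUnicyclic G) :
    Nonempty (USetup G) := by
  classical
  obtain ⟨hconn, ⟨w, p, hp⟩, huniq⟩ := hG
  have hn : 3 ≤ p.length := hp.three_le_length
  set n := p.length with hnlen
  haveI : NeZero n := ⟨by omega⟩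
  set f : ZMod n → V := fun i => p.getVert i.val with hf
  have hfsucc : ∀ i : ZMod n, f (i+1) = p.getVert (i.val + 1) := by
    intro i
    have h1 : (1 : ZMod n).val = 1 := by
      rw [show (1 : ZMod n) = ((1 : ℕ) : ZMod n) by push_cast; ring]
      exact ZMod.val_cast_of_lt (by omega)
    have hv : (i + 1).val = (i.val + 1) % n := by rw [ZMod.val_add, h1]
    rcases Nat.lt_or_ge (i.val + 1) n with h | h
    · rw [hf]; simp only
      rw [hv, Nat.mod_eq_of_lt h]
    · have hiv := ZMod.val_lt i
      have h2 : i.val + 1 = n := by omega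
      show p.getVert (i+1).val = p.getVert (i.val + 1)
      rw [hv, h2, Nat.mod_self, p.getVert_zero, hnlen]
      exact p.getVert_length.symm
  have finj : Function.Injective f := by
    intro i j hij
    exact ZMod.val_injective n (hp.getVert_injOn'' (ZMod.val_lt i) (ZMod.val_lt j) hij)
  have hadj : ∀ i : ZMod n, G.Adj (f i) (f (i+1)) := by
    intro i
    rw [hfsucc i]
    exact p.adj_getVert_succ (ZMod.val_lt i)
  -- distance to the cycle
  set d : V → ℕ := fun v => ((univ : Finset (ZMod n)).image fun i => G.dist v (f i)).min'
    (by simp [Finset.univ_nonempty]) with hd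
  have hdle : ∀ v (i : ZMod n), d v ≤ G.dist v (f i) := by
    intro v i
    exact Finset.min'_le _ _ (Finset.mem_image_of_mem _ (Finset.mem_univ i))
  have hdex : ∀ v, ∃ i : ZMod n, d v = G.dist v (f i) := by
    intro v
    have := Finset.min'_mem ((univ : Finset (ZMod n)).image fun i => G.dist v (f i))
      (by simp [Finset.univ_nonempty])
    rw [Finset.mem_image] at this
    obtain ⟨i, _, hi⟩ := this
    exact ⟨i, hi.symm⟩
  have hd0 : ∀ v, d v = 0 ↔ ∃ i, f i = v := by
    intro v
    constructor
    · intro hv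
      obtain ⟨i, hi⟩ := hdex v
      rw [hv] at hi
      have := (SimpleGraph.dist_eq_zero_iff_eq_or_not_reachable).mp hi.symm
      rcases this with h | h
      · exact ⟨i, h.symm⟩
      · exact absurd (hconn.preconnected v (f i)) h
    · rintro ⟨i, rfl⟩
      have := hdle (f i) i
      simpa [SimpleGraph.dist_self] using this
  -- existence of parent
  have parEx : ∀ v, 1 ≤ d v → ∃ u, G.Adj v u ∧ d u + 1 = d v := by
    intro v hv
    obtain ⟨i, hi⟩ := hdex v
    obtain ⟨W, hW⟩ := (hconn.preconnected v (f i)).exists_walk_length_eq_dist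
    have hWlen : W.length = d v := by rw [hW, ← hi]
    have hnotnil : ¬W.Nil := by
      rw [SimpleGraph.Walk.not_nil_iff_lt_length]
      omega
    refine ⟨W.getVert 1, W.adj_snd hnotnil, ?_⟩
    have htail := SimpleGraph.Walk.length_tail_add_one hnotnil
    have h1 : d (W.getVert 1) ≤ d v - 1 := by
      have h2 : G.dist (W.getVert 1) (f i) ≤ W.tail.length := SimpleGraph.dist_le _
      have := hdle (W.getVert 1) i
      omega
    have h2 : d v ≤ d (W.getVert 1) + 1 := by
      obtain ⟨j, hj⟩ := hdex (W.getVert 1)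
      have ht := hconn.dist_triangle (u := v) (v := W.getVert 1) (w := f j)
      have hadj1 : G.dist v (W.getVert 1) = 1 :=
        SimpleGraph.dist_eq_one_iff_adj.mpr (W.adj_snd hnotnil)
      have := hdle v j
      omega
    omega
  set par : V → V := fun v => if h : 1 ≤ d v then (parEx v h).choose else v with hpar
  have hpadj : ∀ v, 1 ≤ d v → G.Adj v (par v) := by
    intro v h
    rw [hpar]; simp only [h, dif_pos]
    exact (parEx v h).choose_spec.1
  have hpd : ∀ v, 1 ≤ d v → d (par v) + 1 = d v := by
    intro v h
    rw [hpar]; simp only [h, dif_pos]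
    exact (parEx v h).choose_spec.2
  set idx : V → ZMod n := fun v => if h : ∃ i, f i = v then h.choose else 0 with hidxdef
  have hidx : ∀ v, d v = 0 → f (idx v) = v := by
    intro v hv
    have h := (hd0 v).mp hv
    rw [hidxdef]; simp only [h, dif_pos]
    exact h.choose_spec
  -- support membership
  have hmemsup : ∀ i : ZMod n, f i ∈ p.support := by
    intro i
    rw [SimpleGraph.Walk.mem_support_iff_exists_getVert]
    exact ⟨i.val, rfl, le_of_lt (ZMod.val_lt i)⟩
  -- avoidance lemma
  have hsupp : ∀ (v : V) (i : ZMod n) (W : G.Walk v (f i)), W.length ≤ d v →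
      ∀ x ∈ W.support, x ≠ v → d x < d v := by
    intro v i W hWl x hx hxv
    have h1 : G.dist x (f i) ≤ (W.dropUntil x hx).length := SimpleGraph.dist_le _
    have h2 : (W.takeUntil x hx).length + (W.dropUntil x hx).length = W.length := by
      have h4 := congrArg SimpleGraph.Walk.length (SimpleGraph.Walk.take_spec W hx)
      rwa [SimpleGraph.Walk.length_append] at h4
    have h3 : 1 ≤ (W.takeUntil x hx).length := by
      by_contra hc
      push_neg at hc
      exact hxv (SimpleGraph.Walk.eq_of_length_eq_zero (p := W.takeUntil x hx) (by omega)).symm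
    have := hdle x i
    omega
  -- no walk avoiding a non-cycle edge
  have hkey : ∀ a b, G.Adj a b → s(a,b) ∉ p.edges → ∀ (q : G.Walk a b), s(a,b) ∈ q.edges := by
    intro a b hab hnE q
    by_contra hq
    have hex : ∃ (u : V) (c : G.Walk u u), c.IsCycle ∧ s(a,b) ∈ c.edges := by
      rw [← SimpleGraph.adj_and_reachable_delete_edges_iff_exists_cycle]
      exact ⟨hab, SimpleGraph.reachable_delete_edges_iff_exists_walk.mpr ⟨q, hq⟩⟩
    obtain ⟨u, q', hq', he⟩ := hex
    have hs := huniq q' p hq' hp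
    have : s(a,b) ∈ {e | e ∈ p.edges} := hs ▸ he
    exact hnE this
  -- bridge walks along the cycle
  have hbridge : ∀ (i j : ZMod n), ∃ B : G.Walk (f i) (f j), ∀ e ∈ B.edges, e ∈ p.edges := by
    intro i j
    refine ⟨((p.takeUntil (f i) (hmemsup i)).reverse).append (p.takeUntil (f j) (hmemsup j)), ?_⟩
    intro e he
    rw [SimpleGraph.Walk.edges_append, List.mem_append] at he
    rcases he with he | he
    · rw [SimpleGraph.Walk.edges_reverse, List.mem_reverse] at he
      exact SimpleGraph.Walk.edges_takeUntil_subset _ _ he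
    · exact SimpleGraph.Walk.edges_takeUntil_subset _ _ he
  -- shortest walks to cycle
  have walkdown : ∀ v, ∃ (i : ZMod n) (W : G.Walk v (f i)), W.length = d v := by
    intro v
    obtain ⟨i, hi⟩ := hdex v
    obtain ⟨W, hW⟩ := (hconn.preconnected v (f i)).exists_walk_length_eq_dist
    exact ⟨i, W, by rw [hW, ← hi]⟩
  -- adjacent vertices have d differing by at most one
  have hdadj : ∀ x y, G.Adj x y → d x ≤ d y + 1 := by
    intro x y hxy
    obtain ⟨j, hj⟩ := hdex y
    have ht := hconn.dist_triangle (u := x) (v := y) (w := f j)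
    have h1 : G.dist x y = 1 := SimpleGraph.dist_eq_one_iff_adj.mpr hxy
    have := hdle x j
    omega
  -- equal depth impossible for non-cycle edges
  have hneq : ∀ a b, G.Adj a b → s(a,b) ∉ p.edges → d a ≠ d b := by
    intro a b hab hnE he
    obtain ⟨ia, Wa, hWa⟩ := walkdown a
    obtain ⟨ib, Wb, hWb⟩ := walkdown b
    obtain ⟨B, hB⟩ := hbridge ia ib
    have hWaE : s(a,b) ∉ Wa.edges := by
      intro hmem
      have hbmem := SimpleGraph.Walk.snd_mem_support_of_mem_edges Wa hmem
      have := hsupp a ia Wa (le_of_eq hWa) b hbmem (Ne.symm hab.ne)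
      omega
    have hWbE : s(a,b) ∉ Wb.edges := by
      intro hmem
      have hamem := SimpleGraph.Walk.fst_mem_support_of_mem_edges Wb hmem
      have := hsupp b ib Wb (le_of_eq hWb) a hamem hab.ne
      omega
    have := hkey a b hab hnE (Wa.append (B.append Wb.reverse))
    rw [SimpleGraph.Walk.edges_append, List.mem_append, SimpleGraph.Walk.edges_append,
      List.mem_append, SimpleGraph.Walk.edges_reverse, List.mem_reverse] at this
    rcases this with h | h | h
    · exact hWaE h
    · exact hnE (hB _ h)
    · exact hWbE h
  -- parent identification
  have hpar_eq : ∀ a b, G.Adj a b → s(a,b) ∉ p.edges → d b + 1 = d a → par a = b := by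
    intro a b hab hnE hdb
    have h1a : 1 ≤ d a := by omega
    by_contra hub
    set u := par a with hu
    have huadj : G.Adj a u := hpadj a h1a
    have hud : d u + 1 = d a := hpd a h1a
    obtain ⟨iu, Wu, hWu⟩ := walkdown u
    obtain ⟨ib, Wb, hWb⟩ := walkdown b
    obtain ⟨B, hB⟩ := hbridge iu ib
    have hWuE : s(a,b) ∉ Wu.edges := by
      intro hmem
      have hamem := SimpleGraph.Walk.fst_mem_support_of_mem_edges Wu hmem
      have := hsupp u iu Wu (le_of_eq hWu) a hamem huadj.ne
      omega
    have hWbE : s(a,b) ∉ Wb.edges := by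
      intro hmem
      have hamem := SimpleGraph.Walk.fst_mem_support_of_mem_edges Wb hmem
      have := hsupp b ib Wb (le_of_eq hWb) a hamem hab.ne
      omega
    have := hkey a b hab hnE (SimpleGraph.Walk.cons huadj (Wu.append (B.append Wb.reverse)))
    rw [SimpleGraph.Walk.edges_cons, List.mem_cons, SimpleGraph.Walk.edges_append,
      List.mem_append, SimpleGraph.Walk.edges_append, List.mem_append,
      SimpleGraph.Walk.edges_reverse, List.mem_reverse] at this
    rcases this with h | h | h | h
    · exact hub (Sym2.congr_right.mp h).symm
    · exact hWuE h
    · exact hnE (hB _ h)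
    · exact hWbE h
  -- the classification
  have hclass : ∀ a b, G.Adj a b →
      (∃ i, a = f i ∧ b = f (i+1)) ∨ (∃ i, b = f i ∧ a = f (i+1)) ∨
      (1 ≤ d a ∧ par a = b) ∨ (1 ≤ d b ∧ par b = a) := by
    intro a b hab
    by_cases hE : s(a,b) ∈ p.edges
    · obtain ⟨t, ht, he⟩ := p.mem_edges_iff_getVert.mp hE
      set i : ZMod n := (t : ZMod n) with hi
      have hiv : i.val = t := ZMod.val_cast_of_lt ht
      have hfi : f i = p.getVert t := by rw [hf]; simp only; rw [hiv]
      have hfi1 : f (i+1) = p.getVert (t+1) := by rw [hfsucc, hiv]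
      rw [Sym2.eq_iff] at he
      rcases he with ⟨ha, hb⟩ | ⟨ha, hb⟩
      · exact Or.inl ⟨i, by rw [hfi, ha], by rw [hfi1, hb]⟩
      · exact Or.inr (Or.inl ⟨i, by rw [hfi, hb], by rw [hfi1, ha]⟩)
    · have hne := hneq a b hab hE
      have h1 := hdadj a b hab
      have h2 := hdadj b a hab.symm
      rcases Nat.lt_or_ge (d b) (d a) with h | h
      · have : d b + 1 = d a := by omega
        exact Or.inr (Or.inr (Or.inl ⟨by omega, hpar_eq a b hab hE this⟩))
      · have : d a + 1 = d b := by omega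
        have hE' : s(b,a) ∉ p.edges := by rwa [Sym2.eq_swap]
        exact Or.inr (Or.inr (Or.inr ⟨by omega, hpar_eq b a hab.symm hE' this⟩))
  exact ⟨⟨n, hn, f, d, par, idx, finj, hadj, hd0, hidx, hpadj, hpd, hclass⟩⟩

namespace UC
noncomputable section
open Classical

/-- number of colors -/
def P (Δ : ℕ) : ℕ := 3*Δ/2+1

/-- cycle coloring pattern on naturals -/
def chiN (n a : ℕ) : ℕ := if a = n-1 ∧ ¬(3 ∣ n) then 3 else a % 3

lemma chiN_lt (n a : ℕ) : chiN n a < 4 := by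
  unfold chiN; split_ifs <;> omega

lemma chiN_prop (n a : ℕ) (h3 : 3 ≤ n) (ha : a < n) : chiN n a ≠ chiN n ((a+1) % n) := by
  rcases Nat.lt_or_ge (a+1) n with h | h
  · rw [Nat.mod_eq_of_lt h]
    unfold chiN; split_ifs <;> omega
  · have he : a + 1 = n := by omega
    rw [he, Nat.mod_self]
    unfold chiN; split_ifs <;> omega

lemma chiN_star (n a : ℕ) (h4 : 4 ≤ n) (ha : a < n) :
    ¬(chiN n a = chiN n ((a+2) % n) ∧ chiN n ((a+1) % n) = chiN n ((a+3) % n)) := by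
  rcases Nat.lt_or_ge (a+3) n with h | h
  · rw [Nat.mod_eq_of_lt h, Nat.mod_eq_of_lt (by omega), Nat.mod_eq_of_lt (by omega)]
    unfold chiN; split_ifs <;> omega
  · rcases Nat.lt_or_ge (a+2) n with h2 | h2
    · -- a + 3 = n
      have he : a + 3 = n := by omega
      rw [Nat.mod_eq_of_lt h2, Nat.mod_eq_of_lt (by omega),
        show (a+3) % n = 0 by rw [he, Nat.mod_self]]
      unfold chiN; split_ifs <;> omega
    · rcases Nat.lt_or_ge (a+1) n with h1 | h1
      · -- a + 2 = n
        have he : a + 2 = n := by omega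
        rw [Nat.mod_eq_of_lt h1, show (a+2) % n = 0 by rw [he, Nat.mod_self],
          show (a+3) % n = 1 by rw [show a+3 = n+1 by omega, Nat.add_mod_left, Nat.mod_eq_of_lt (by omega)]]
        unfold chiN; split_ifs <;> omega
      · -- a + 1 = n
        have he : a + 1 = n := by omega
        rw [show (a+1) % n = 0 by rw [he, Nat.mod_self],
          show (a+2) % n = 1 by rw [show a+2 = n+1 by omega, Nat.add_mod_left, Nat.mod_eq_of_lt (by omega)],
          show (a+3) % n = 2 by rw [show a+3 = n+2 by omega, Nat.add_mod_left, Nat.mod_eq_of_lt (by omega)]]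
        unfold chiN; split_ifs <;> omega

variable {V : Type*} [Fintype V] {G : SimpleGraph V}

/-- an arbitrary injective enumeration -/
def ord : V → ℕ := fun v => ((Fintype.equivFin V) v : ℕ)

lemma ord_inj : Function.Injective (ord (V := V)) := by
  intro a b h
  have := (Fintype.equivFin V).injective (Fin.ext h)
  exact this

variable (S : USetup G) (Δ : ℕ)

instance : NeZero S.n := ⟨by have := S.hn; omega⟩

def chi (i : ZMod S.n) : ℕ := chiN S.n i.val

lemma val_add_nat (i : ZMod S.n) (k : ℕ) : (i + (k : ZMod S.n)).val = (i.val + k) % S.n := by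
  rw [ZMod.val_add, ZMod.val_natCast]
  conv_rhs => rw [Nat.add_mod]
  conv_lhs => rw [Nat.add_mod]
  rw [Nat.mod_mod]

def children (u : V) : Finset V :=
  univ.filter (fun w => S.par w = u ∧ S.d w = S.d u + 1 ∧ G.Adj w u)

def mm (u : V) : ℕ := (children S u).card

def rank (v : V) : ℕ := ((children S (S.par v)).filter (fun w => ord w < ord v)).card

def beaten (v : V) : Finset V :=
  (children S (S.par v)).filter (fun w => w ≠ v ∧
    (rank S w + mm S (S.par v) - rank S v) % mm S (S.par v) ≤ mm S (S.par v) / 2)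

def ICC (u : V) : Finset ℕ := {chi S (S.idx u - 1), chi S (S.idx u)}

def near4 (u : V) : Finset ℕ :=
  {chi S (S.idx u - 2), chi S (S.idx u - 1), chi S (S.idx u), chi S (S.idx u + 1)}

/-- colors of a subset of siblings, read off from the parent's list -/
def pickCols (L : List ℕ) (s : Finset V) : Finset ℕ := s.image (fun w => L.getD (rank S w) 0)

def A : ℕ → V → List ℕ
  | 0, u => ((Finset.range (P Δ)) \ near4 S u).sort (· ≤ ·)
  | (k+1), u =>
    if S.d u = 0 then ((Finset.range (P Δ)) \ near4 S u).sort (· ≤ ·)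
    else ((Finset.range (P Δ)) \ (insert ((A k (S.par u)).getD (rank S u) 0)
      ((if S.d (S.par u) = 0 then ICC S (S.par u)
        else {(A k (S.par (S.par u))).getD (rank S (S.par u)) 0})
       ∪ pickCols S (A k (S.par u)) (beaten S u)))).sort (· ≤ ·)

def avail (u : V) : List ℕ := A S Δ (S.d u) u

def col (v : V) : ℕ := (avail S Δ (S.par v)).getD (rank S v) 0

def Forb (u : V) : Finset ℕ :=
  insert (col S Δ u)
    ((if S.d (S.par u) = 0 then ICC S (S.par u) else {col S Δ (S.par u)})
     ∪ pickCols S (avail S Δ (S.par u)) (beaten S u))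

lemma A_succ (k : ℕ) (u : V) : A S Δ (k+1) u =
    (if S.d u = 0 then ((Finset.range (P Δ)) \ near4 S u).sort (· ≤ ·)
    else ((Finset.range (P Δ)) \ (insert ((A S Δ k (S.par u)).getD (rank S u) 0)
      ((if S.d (S.par u) = 0 then ICC S (S.par u)
        else {(A S Δ k (S.par (S.par u))).getD (rank S (S.par u)) 0})
       ∪ pickCols S (A S Δ k (S.par u)) (beaten S u)))).sort (· ≤ ·)) := by
  rfl

lemma A_step : ∀ (k : ℕ) (u : V), S.d u ≤ k → A S Δ (k+1) u = A S Δ k u := by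
  intro k
  induction k with
  | zero =>
    intro u hu
    have h0 : S.d u = 0 := by omega
    rw [A_succ, if_pos h0]
    rfl
  | succ k ih =>
    intro u hu
    conv_lhs => rw [A_succ]
    conv_rhs => rw [A_succ]
    rcases Nat.eq_zero_or_pos (S.d u) with h0 | h1
    · rw [if_pos h0, if_pos h0]
    · have hp : S.d (S.par u) + 1 = S.d u := S.hpd u h1
      rw [if_neg (show ¬ S.d u = 0 by omega), if_neg (show ¬ S.d u = 0 by omega)]
      have e1 : A S Δ (k+1) (S.par u) = A S Δ k (S.par u) := ih (S.par u) (by omega)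
      rcases Nat.eq_zero_or_pos (S.d (S.par u)) with hq0 | hq1
      · rw [if_pos hq0, if_pos hq0, e1]
      · have hq : S.d (S.par (S.par u)) + 1 = S.d (S.par u) := S.hpd (S.par u) hq1
        have e2 : A S Δ (k+1) (S.par (S.par u)) = A S Δ k (S.par (S.par u)) :=
          ih (S.par (S.par u)) (by omega)
        rw [if_neg (show ¬ S.d (S.par u) = 0 by omega),
          if_neg (show ¬ S.d (S.par u) = 0 by omega), e1, e2]

lemma A_stab : ∀ (k : ℕ) (u : V), S.d u ≤ k → A S Δ k u = A S Δ (S.d u) u := by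
  intro k
  induction k with
  | zero => intro u hu; rw [Nat.le_zero.mp hu]
  | succ k ih =>
    intro u hu
    rcases Nat.lt_or_ge (S.d u) (k+1) with h | h
    · rw [A_step S Δ k u (by omega), ih u (by omega)]
    · have : S.d u = k + 1 := by omega
      rw [this]

lemma avail_eq0 {u : V} (hu : S.d u = 0) :
    avail S Δ u = ((Finset.range (P Δ)) \ near4 S u).sort (· ≤ ·) := by
  rw [avail, hu]
  rfl

lemma avail_eq1 {u : V} (hu : 1 ≤ S.d u) :
    avail S Δ u = ((Finset.range (P Δ)) \ Forb S Δ u).sort (· ≤ ·) := by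
  obtain ⟨j, hj⟩ : ∃ j, S.d u = j + 1 := ⟨S.d u - 1, by omega⟩
  have hp : S.d (S.par u) = j := by have := S.hpd u hu; omega
  rw [avail, hj, A_succ, if_neg (show ¬ S.d u = 0 by omega)]
  have e1 : A S Δ j (S.par u) = avail S Δ (S.par u) := by rw [avail, hp]
  rcases Nat.eq_zero_or_pos j with hj0 | hj1
  · rw [if_pos (by rw [hp, hj0]), Forb, if_pos (by rw [hp, hj0]), e1]
    simp only [col]
  · have hpp : S.d (S.par (S.par u)) = j - 1 := by
      have := S.hpd (S.par u) (by omega); omega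
    have e2 : A S Δ j (S.par (S.par u)) = avail S Δ (S.par (S.par u)) := by
      rw [avail, hpp]
      exact (A_stab S Δ j _ (by omega)).trans (by rw [hpp])
    rw [if_neg (show ¬ S.d (S.par u) = 0 by omega), Forb,
      if_neg (show ¬ S.d (S.par u) = 0 by omega), e1, e2]
    simp only [col]

lemma mem_children {w u : V} : w ∈ children S u ↔
    S.par w = u ∧ S.d w = S.d u + 1 ∧ G.Adj w u := by
  simp [children]

lemma self_mem_children {u : V} (hu : 1 ≤ S.d u) : u ∈ children S (S.par u) := by
  rw [mem_children]
  exact ⟨rfl, by have := S.hpd u hu; omega, S.hpadj u hu⟩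

lemma rank_lt {v u : V} (hv : v ∈ children S u) : rank S v < mm S u := by
  have hpv : S.par v = u := ((mem_children S).mp hv).1
  have hsub : (children S (S.par v)).filter (fun w => ord w < ord v) ⊆
      (children S u).erase v := by
    intro w hw
    rw [Finset.mem_filter] at hw
    rw [Finset.mem_erase]
    refine ⟨fun he => ?_, hpv ▸ hw.1⟩
    subst he
    exact lt_irrefl _ hw.2
  have h1 : rank S v ≤ ((children S u).erase v).card := by
    rw [rank, hpv]
    exact Finset.card_le_card (hpv ▸ hsub)
  have h2 := Finset.card_erase_lt_of_mem hv
  unfold mm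
  omega

lemma rank_strict {v w u : V} (hv : v ∈ children S u) (hw : w ∈ children S u)
    (ho : ord v < ord w) : rank S v < rank S w := by
  have hpv : S.par v = u := ((mem_children S).mp hv).1
  have hpw : S.par w = u := ((mem_children S).mp hw).1
  have hsub : insert v ((children S u).filter (fun x => ord x < ord v)) ⊆
      (children S u).filter (fun x => ord x < ord w) := by
    intro x hx
    rw [Finset.mem_insert] at hx
    rcases hx with rfl | hx
    · rw [Finset.mem_filter]; exact ⟨hv, ho⟩
    · rw [Finset.mem_filter] at hx ⊢
      exact ⟨hx.1, lt_trans hx.2 ho⟩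
  have hni : v ∉ (children S u).filter (fun x => ord x < ord v) := by
    rw [Finset.mem_filter]
    rintro ⟨-, h⟩
    exact lt_irrefl _ h
  have := Finset.card_le_card hsub
  rw [Finset.card_insert_of_notMem hni] at this
  rw [rank, rank, hpv, hpw]
  omega

lemma rank_injOn {v w u : V} (hv : v ∈ children S u) (hw : w ∈ children S u)
    (h : rank S v = rank S w) : v = w := by
  by_contra hne
  rcases lt_trichotomy (ord v) (ord w) with ho | ho | ho
  · have := rank_strict S hv hw ho; omega
  · exact hne (ord_inj ho)
  · have := rank_strict S hw hv ho; omega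

lemma circ_eq (m a b : ℕ) (ha : a < m) (hb : b < m) :
    (b + m - a) % m = if a ≤ b then b - a else b + m - a := by
  split_ifs with h
  · rw [show b + m - a = m + (b - a) by omega, Nat.add_mod_left, Nat.mod_eq_of_lt (by omega)]
  · rw [Nat.mod_eq_of_lt (by omega)]

lemma beaten_cover {v w u : V} (hv : v ∈ children S u) (hw : w ∈ children S u)
    (hne : v ≠ w) : w ∈ beaten S v ∨ v ∈ beaten S w := by
  have hpv : S.par v = u := ((mem_children S).mp hv).1
  have hpw : S.par w = u := ((mem_children S).mp hw).1
  have hrv := rank_lt S hv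
  have hrw := rank_lt S hw
  have hrne : rank S v ≠ rank S w := fun h => hne (rank_injOn S hv hw h)
  have e1 := circ_eq (mm S u) (rank S v) (rank S w) hrv hrw
  have e2 := circ_eq (mm S u) (rank S w) (rank S v) hrw hrv
  rcases le_or_gt ((rank S w + mm S u - rank S v) % mm S u) (mm S u / 2) with h | h
  · left
    rw [beaten, Finset.mem_filter, hpv]
    exact ⟨hw, hne.symm, h⟩
  · right
    rw [beaten, Finset.mem_filter, hpw]
    refine ⟨hv, hne, ?_⟩
    split_ifs at e1 e2 <;> omega

lemma card_beaten_le {v u : V} (hv : v ∈ children S u) :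
    (beaten S v).card ≤ mm S u / 2 := by
  have hpv : S.par v = u := ((mem_children S).mp hv).1
  have hrv := rank_lt S hv
  have : (beaten S v).card ≤ (Finset.Icc 1 (mm S u / 2)).card := by
    apply Finset.card_le_card_of_injOn
      (fun w => (rank S w + mm S u - rank S v) % mm S u)
    · intro w hw
      simp only [beaten, Finset.mem_coe, Finset.mem_filter, hpv] at hw
      obtain ⟨hwc, hwne, hwle⟩ := hw
      have hrw := rank_lt S hwc
      have hrne : rank S w ≠ rank S v := fun h => hwne (rank_injOn S hwc hv h)
      have e1 := circ_eq (mm S u) (rank S v) (rank S w) hrv hrw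
      rw [Finset.mem_coe, Finset.mem_Icc]; beta_reduce
      constructor
      · split_ifs at e1 <;> omega
      · exact hwle
    · intro w1 h1 w2 h2 he
      simp only [beaten, Finset.mem_coe, Finset.mem_filter, hpv] at h1 h2
      have hr1 := rank_lt S h1.1
      have hr2 := rank_lt S h2.1
      apply rank_injOn S h1.1 h2.1
      have e1 := circ_eq (mm S u) (rank S v) (rank S w1) hrv hr1
      have e2 := circ_eq (mm S u) (rank S v) (rank S w2) hrv hr2
      simp only at he
      split_ifs at e1 e2 <;> omega
  have : (Finset.Icc 1 (mm S u / 2)).card = mm S u / 2 := by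
    rw [Nat.card_Icc]; omega
  omega

lemma mm_le_tree {u : V} (hΔ : ∀ (s : Finset V) (v : V), (∀ x ∈ s, G.Adj v x) → s.card ≤ Δ)
    (hu : 1 ≤ S.d u) : mm S u + 1 ≤ Δ := by
  have hpu : S.par u ∉ children S u := by
    rw [mem_children]
    rintro ⟨-, hd, -⟩
    have := S.hpd u hu
    omega
  have hadj : ∀ x ∈ insert (S.par u) (children S u), G.Adj u x := by
    intro x hx
    rw [Finset.mem_insert] at hx
    rcases hx with rfl | hx
    · exact S.hpadj u hu
    · exact (((mem_children S).mp hx).2.2).symm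
  have := hΔ _ u hadj
  rw [Finset.card_insert_of_notMem hpu] at this
  unfold mm
  omega

lemma two_ne_zero' : (2 : ZMod S.n) ≠ 0 := by
  intro h
  have h2 : ((2 : ℕ) : ZMod S.n) = 0 := by push_cast; exact h
  rw [ZMod.natCast_eq_zero_iff] at h2
  have := S.hn
  have := Nat.le_of_dvd (by norm_num) h2
  omega

lemma mm_le_cyc {u : V} (hΔ : ∀ (s : Finset V) (v : V), (∀ x ∈ s, G.Adj v x) → s.card ≤ Δ)
    (hu : S.d u = 0) : mm S u + 2 ≤ Δ := by
  have hfu : S.f (S.idx u) = u := S.hidx u hu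
  set a := S.f (S.idx u + 1) with ha
  set b := S.f (S.idx u - 1) with hb
  have hadja : G.Adj u a := hfu ▸ S.hadj (S.idx u)
  have hadjb : G.Adj b u := by
    have := S.hadj (S.idx u - 1)
    rwa [sub_add_cancel, hfu] at this
  have hdab : ∀ j : ZMod S.n, S.d (S.f j) = 0 := fun j => (S.hd0 _).mpr ⟨j, rfl⟩
  have hanc : a ∉ children S u := by
    rw [mem_children]; rintro ⟨-, hd, -⟩; rw [hdab] at hd; omega
  have hbnc : b ∉ children S u := by
    rw [mem_children]; rintro ⟨-, hd, -⟩; rw [hdab] at hd; omega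
  have hab : a ≠ b := by
    intro h
    have := S.finj h
    have h2 : (2 : ZMod S.n) = 0 := by linear_combination this
    exact two_ne_zero' S h2
  have hadjall : ∀ x ∈ insert a (insert b (children S u)), G.Adj u x := by
    intro w hw
    rw [Finset.mem_insert, Finset.mem_insert] at hw
    rcases hw with rfl | rfl | hw
    · exact hadja
    · exact hadjb.symm
    · exact (((mem_children S).mp hw).2.2).symm
  have hc := hΔ _ u hadjall
  rw [Finset.card_insert_of_notMem (by
      rw [Finset.mem_insert]; rintro (h' | h); exact hab h'; exact hanc h),
    Finset.card_insert_of_notMem hbnc] at hc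
  unfold mm
  omega

lemma card_near4_le (u : V) : (near4 S u).card ≤ 4 := by
  unfold near4
  apply le_trans (Finset.card_insert_le _ _)
  have : ({chi S (S.idx u - 1), chi S (S.idx u), chi S (S.idx u + 1)} : Finset ℕ).card ≤ 3 := by
    apply le_trans (Finset.card_insert_le _ _)
    have : ({chi S (S.idx u), chi S (S.idx u + 1)} : Finset ℕ).card ≤ 2 :=
      Finset.card_insert_le _ _
    omega
  omega

lemma card_ICC_le (u : V) : (ICC S u).card ≤ 2 := Finset.card_insert_le _ _

lemma card_forb_le {u : V} (hΔ : ∀ (s : Finset V) (v : V), (∀ x ∈ s, G.Adj v x) → s.card ≤ Δ)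
    (hu : 1 ≤ S.d u) :
    (Forb S Δ u).card ≤
      (if S.d (S.par u) = 0 then 3 + (Δ - 2)/2 else 2 + (Δ - 1)/2) := by
  have husc := self_mem_children S hu
  have hbc := card_beaten_le S husc
  have hpc : (pickCols S (avail S Δ (S.par u)) (beaten S u)).card ≤ (beaten S u).card :=
    Finset.card_image_le
  rcases Nat.eq_zero_or_pos (S.d (S.par u)) with h0 | h1
  · rw [if_pos h0]
    have hmm := mm_le_cyc S Δ (u := S.par u) hΔ h0
    rw [Forb, if_pos h0]
    have := Finset.card_insert_le (col S Δ u)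
      (ICC S (S.par u) ∪ pickCols S (avail S Δ (S.par u)) (beaten S u))
    have hun := Finset.card_union_le (ICC S (S.par u))
      (pickCols S (avail S Δ (S.par u)) (beaten S u))
    have := card_ICC_le S (S.par u)
    omega
  · rw [if_neg (by omega)]
    have hmm := mm_le_tree S Δ (u := S.par u) hΔ h1
    rw [Forb, if_neg (by omega)]
    have := Finset.card_insert_le (col S Δ u)
      (({col S Δ (S.par u)} : Finset ℕ) ∪ pickCols S (avail S Δ (S.par u)) (beaten S u))
    have hun := Finset.card_union_le ({col S Δ (S.par u)} : Finset ℕ)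
      (pickCols S (avail S Δ (S.par u)) (beaten S u))
    have : ({col S Δ (S.par u)} : Finset ℕ).card = 1 := Finset.card_singleton _
    omega

lemma length_avail {u : V} (hΔ : ∀ (s : Finset V) (v : V), (∀ x ∈ s, G.Adj v x) → s.card ≤ Δ)
    (hΔ2 : 2 ≤ Δ) :
    mm S u ≤ (avail S Δ u).length := by
  have hP : P Δ = 3*Δ/2+1 := rfl
  rcases Nat.eq_zero_or_pos (S.d u) with h0 | h1
  · rw [avail_eq0 S Δ h0, Finset.length_sort]
    have h4 := card_near4_le S u
    have hle := Finset.le_card_sdiff (near4 S u) (Finset.range (P Δ))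
    rw [Finset.card_range] at hle
    have hmm := mm_le_cyc S Δ hΔ h0
    omega
  · rw [avail_eq1 S Δ h1, Finset.length_sort]
    have hf := card_forb_le S Δ hΔ h1
    have hle := Finset.le_card_sdiff (Forb S Δ u) (Finset.range (P Δ))
    rw [Finset.card_range] at hle
    have hmm : mm S u + 1 ≤ Δ := mm_le_tree S Δ hΔ h1
    split_ifs at hf <;> omega

/-! ### facts about col -/

variable {Δ} in
lemma avail_lt_P {u : V} {x : ℕ} (hx : x ∈ avail S Δ u) : x < P Δ := by
  rcases Nat.eq_zero_or_pos (S.d u) with h0 | h1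
  · rw [avail_eq0 S Δ h0, Finset.mem_sort, Finset.mem_sdiff, Finset.mem_range] at hx
    exact hx.1
  · rw [avail_eq1 S Δ h1, Finset.mem_sort, Finset.mem_sdiff, Finset.mem_range] at hx
    exact hx.1

section ColFacts
variable (hΔ : ∀ (s : Finset V) (v : V), (∀ x ∈ s, G.Adj v x) → s.card ≤ Δ) (hΔ2 : 2 ≤ Δ)
include hΔ hΔ2

lemma rank_lt_length {v : V} (hv : 1 ≤ S.d v) :
    rank S v < (avail S Δ (S.par v)).length :=
  lt_of_lt_of_le (rank_lt S (self_mem_children S hv)) (length_avail S Δ hΔ hΔ2)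

lemma col_mem_avail {v : V} (hv : 1 ≤ S.d v) : col S Δ v ∈ avail S Δ (S.par v) := by
  rw [col, List.getD_eq_getElem _ _ (rank_lt_length S Δ hΔ hΔ2 hv)]
  exact List.getElem_mem _

lemma col_lt_P {v : V} (hv : 1 ≤ S.d v) : col S Δ v < P Δ :=
  avail_lt_P S (col_mem_avail S Δ hΔ hΔ2 hv)

lemma col_notin_forb {v : V} (hv : 1 ≤ S.d v) (hp : 1 ≤ S.d (S.par v)) :
    col S Δ v ∉ Forb S Δ (S.par v) := by
  have := col_mem_avail S Δ hΔ hΔ2 hv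
  rw [avail_eq1 S Δ hp, Finset.mem_sort, Finset.mem_sdiff] at this
  exact this.2

lemma col_notin_near4 {v : V} (hv : 1 ≤ S.d v) (hp : S.d (S.par v) = 0) :
    col S Δ v ∉ near4 S (S.par v) := by
  have := col_mem_avail S Δ hΔ hΔ2 hv
  rw [avail_eq0 S Δ hp, Finset.mem_sort, Finset.mem_sdiff] at this
  exact this.2

lemma col_sib_ne {v w : V} (hv : 1 ≤ S.d v) (hw : 1 ≤ S.d w)
    (hp : S.par v = S.par w) (hne : v ≠ w) : col S Δ v ≠ col S Δ w := by
  intro h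
  rw [col, col, ← hp] at h
  rw [List.getD_eq_getElem _ _ (rank_lt_length S Δ hΔ hΔ2 hv),
    List.getD_eq_getElem _ _ (hp ▸ rank_lt_length S Δ hΔ hΔ2 hw)] at h
  have hnd : (avail S Δ (S.par v)).Nodup := by
    rcases Nat.eq_zero_or_pos (S.d (S.par v)) with h0 | h1
    · rw [avail_eq0 S Δ h0]; exact Finset.sort_nodup _ _
    · rw [avail_eq1 S Δ h1]; exact Finset.sort_nodup _ _
  have hrr : rank S v = rank S w := hnd.getElem_inj_iff.mp h
  exact hne (rank_injOn S (self_mem_children S hv) (hp ▸ self_mem_children S hw) hrr)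

end ColFacts

lemma col_self_mem_forb (u : V) : col S Δ u ∈ Forb S Δ u := by
  rw [Forb]; exact Finset.mem_insert_self _ _

lemma col_par_mem_forb {u : V} (hp : 1 ≤ S.d (S.par u)) :
    col S Δ (S.par u) ∈ Forb S Δ u := by
  rw [Forb, Finset.mem_insert]
  right
  rw [Finset.mem_union, if_neg (by omega)]
  exact Or.inl (Finset.mem_singleton_self _)

lemma ICC_subset_forb {u : V} (hp : S.d (S.par u) = 0) :
    ICC S (S.par u) ⊆ Forb S Δ u := by
  intro x hx
  rw [Forb, Finset.mem_insert]
  right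
  rw [Finset.mem_union, if_pos hp]
  exact Or.inl hx

lemma col_beaten_mem_forb {v w : V} (hw : w ∈ beaten S v) :
    col S Δ w ∈ Forb S Δ v := by
  have hpw : S.par w = S.par v := by
    have := (Finset.mem_filter.mp hw).1
    exact ((mem_children S).mp this).1
  rw [Forb, Finset.mem_insert]
  right
  rw [Finset.mem_union]
  right
  rw [pickCols, Finset.mem_image]
  exact ⟨w, hw, by rw [col, hpw]⟩

/-! ### facts about the cycle coloring -/

lemma d_f (i : ZMod S.n) : S.d (S.f i) = 0 := (S.hd0 _).mpr ⟨i, rfl⟩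

lemma idx_f (i : ZMod S.n) : S.idx (S.f i) = i :=
  S.finj (S.hidx (S.f i) (d_f S i))

lemma chi_lt (i : ZMod S.n) : chi S i < 4 := chiN_lt _ _

lemma chi_succ_val (i : ZMod S.n) (k : ℕ) : chi S (i + (k : ZMod S.n)) = chiN S.n ((i.val + k) % S.n) := by
  rw [chi, val_add_nat]

lemma chi_ne_succ (i : ZMod S.n) : chi S i ≠ chi S (i + 1) := by
  have h := chiN_prop S.n i.val S.hn (ZMod.val_lt i)
  have e : chi S (i + 1) = chiN S.n ((i.val + 1) % S.n) := by
    rw [show (1 : ZMod S.n) = ((1:ℕ) : ZMod S.n) by push_cast; ring, chi_succ_val]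
  rw [chi, e]
  exact h

lemma chi_mem_ICC_left (i : ZMod S.n) : chi S i ∈ ICC S (S.f i) := by
  rw [ICC, idx_f]
  exact Finset.mem_insert_of_mem (Finset.mem_singleton_self _)

lemma chi_mem_ICC_right (i : ZMod S.n) : chi S i ∈ ICC S (S.f (i+1)) := by
  rw [ICC, idx_f]
  have : i + 1 - 1 = i := by ring
  rw [this]
  exact Finset.mem_insert_self _ _

lemma ICC_subset_near4 (u : V) : ICC S u ⊆ near4 S u := by
  intro x hx
  rw [ICC, Finset.mem_insert, Finset.mem_singleton] at hx
  rw [near4, Finset.mem_insert, Finset.mem_insert, Finset.mem_insert, Finset.mem_singleton]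
  rcases hx with h | h
  · right; left; exact h
  · right; right; left; exact h

lemma chi_mem_near4_plus (i : ZMod S.n) : chi S (i+1) ∈ near4 S (S.f i) := by
  rw [near4, idx_f]
  simp only [Finset.mem_insert, Finset.mem_singleton]
  tauto

lemma chi_mem_near4_minus (i : ZMod S.n) : chi S (i-2) ∈ near4 S (S.f i) := by
  rw [near4, idx_f]
  simp only [Finset.mem_insert, Finset.mem_singleton]
  tauto

/-! ### the edge coloring -/

def ec (a b : V) : ℕ :=
  if h1 : ∃ i, a = S.f i ∧ b = S.f (i+1) then chi S h1.choose
  else if h2 : ∃ i, b = S.f i ∧ a = S.f (i+1) then chi S h2.choose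
  else if S.d a < S.d b then col S Δ b
  else if S.d b < S.d a then col S Δ a
  else 0

lemma not_both_dir {a b : V} (h1 : ∃ i, a = S.f i ∧ b = S.f (i+1))
    (h2 : ∃ i, b = S.f i ∧ a = S.f (i+1)) : False := by
  obtain ⟨i, hai, hbi⟩ := h1
  obtain ⟨j, hbj, haj⟩ := h2
  have e1 : i = j + 1 := S.finj (hai.symm.trans haj)
  have e2 : j = i + 1 := S.finj (hbj.symm.trans hbi)
  have key : i = i + 2 := by
    calc i = j + 1 := e1
    _ = (i + 1) + 1 := by rw [e2]
    _ = i + 2 := by ring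
  have : (2 : ZMod S.n) = 0 := by linear_combination -key
  exact two_ne_zero' S this

lemma ec_symm (a b : V) : ec S Δ a b = ec S Δ b a := by
  rw [ec, ec]
  by_cases h1 : ∃ i, a = S.f i ∧ b = S.f (i+1) <;>
  by_cases h2 : ∃ i, b = S.f i ∧ a = S.f (i+1)
  · exact (not_both_dir S h1 h2).elim
  · rw [dif_pos h1, dif_neg h2, dif_pos h1]
  · rw [dif_neg h1, dif_pos h2, dif_pos h2]
  · rw [dif_neg h1, dif_neg h2, dif_neg h2, dif_neg h1]
    rcases lt_trichotomy (S.d a) (S.d b) with h | h | h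
    · rw [if_pos h, if_neg (by omega), if_pos h]
    · rw [if_neg (by omega), if_neg (by omega), if_neg (by omega), if_neg (by omega)]
    · rw [if_neg (by omega), if_pos h, if_pos h]

def cc : Sym2 V → ℕ := Sym2.lift ⟨fun a b => ec S Δ a b, fun a b => ec_symm S Δ a b⟩

lemma cc_mk (a b : V) : cc S Δ s(a, b) = ec S Δ a b := rfl

lemma cc_eq_chi {a b : V} {i : ZMod S.n} (ha : a = S.f i) (hb : b = S.f (i+1)) :
    cc S Δ s(a, b) = chi S i := by
  rw [cc_mk, ec, dif_pos ⟨i, ha, hb⟩]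
  congr 1
  have hspec := (⟨i, ha, hb⟩ : ∃ j, a = S.f j ∧ b = S.f (j+1)).choose_spec
  exact (S.finj (hspec.1.symm.trans ha)).symm ▸ rfl

lemma cc_eq_col {v : V} (hv : 1 ≤ S.d v) : cc S Δ s(v, S.par v) = col S Δ v := by
  have hdv : ∀ j : ZMod S.n, v ≠ S.f j := by
    intro j h
    have := d_f S j
    rw [← h] at this
    omega
  have hpd := S.hpd v hv
  rw [cc_mk, ec, dif_neg (by rintro ⟨i, h, -⟩; exact hdv i h),
    dif_neg (by rintro ⟨i, -, h⟩; exact hdv (i+1) h),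
    if_neg (by omega), if_pos (by omega)]

lemma cc_eq_col' {v : V} (hv : 1 ≤ S.d v) : cc S Δ s(S.par v, v) = col S Δ v := by
  rw [Sym2.eq_swap]; exact cc_eq_col S Δ hv

lemma cc_eq_chi' {a b : V} {i : ZMod S.n} (ha : a = S.f i) (hb : b = S.f (i+1)) :
    cc S Δ s(b, a) = chi S i := by
  rw [Sym2.eq_swap]; exact cc_eq_chi S Δ ha hb

lemma chi_idx_mem_near4 (u : V) : chi S (S.idx u) ∈ near4 S u := by
  simp only [near4, Finset.mem_insert, Finset.mem_singleton]; tauto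

lemma chi_idxm1_mem_near4 (u : V) : chi S (S.idx u - 1) ∈ near4 S u := by
  simp only [near4, Finset.mem_insert, Finset.mem_singleton]; tauto

/-- normal form of an edge at `u` -/
lemma edge_val {u x : V} (h : G.Adj u x) :
    (S.d u = 0 ∧ ((cc S Δ s(u,x) = chi S (S.idx u) ∧ x = S.f (S.idx u + 1)) ∨
      (cc S Δ s(u,x) = chi S (S.idx u - 1) ∧ x = S.f (S.idx u - 1)))) ∨
    (1 ≤ S.d u ∧ S.par u = x ∧ cc S Δ s(u,x) = col S Δ u) ∨
    (1 ≤ S.d x ∧ S.par x = u ∧ cc S Δ s(u,x) = col S Δ x) := by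
  rcases S.hclass u x h with ⟨i, hu, hx⟩ | ⟨i, hx, hu⟩ | ⟨hd, hp⟩ | ⟨hd, hp⟩
  · subst hu
    left
    refine ⟨d_f S i, Or.inl ⟨?_, ?_⟩⟩
    · rw [idx_f]; exact cc_eq_chi S Δ rfl hx
    · rw [idx_f]; exact hx
  · subst hu
    left
    refine ⟨d_f S (i+1), Or.inr ⟨?_, ?_⟩⟩
    · rw [idx_f, show i + 1 - 1 = i by ring]
      exact cc_eq_chi' S Δ hx rfl
    · rw [idx_f, show i + 1 - 1 = i by ring]; exact hx
  · right; left
    refine ⟨hd, hp, ?_⟩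
    rw [← hp]; exact cc_eq_col S Δ hd
  · right; right
    refine ⟨hd, hp, ?_⟩
    rw [← hp]; exact cc_eq_col' S Δ hd

section Verify
variable (hΔ : ∀ (s : Finset V) (v : V), (∀ x ∈ s, G.Adj v x) → s.card ≤ Δ) (hΔ2 : 2 ≤ Δ)
include hΔ hΔ2

lemma cc_lt_P {u x : V} (h : G.Adj u x) : cc S Δ s(u,x) < P Δ := by
  have hP : 4 ≤ P Δ := by rw [P]; omega
  rcases edge_val S Δ h with ⟨h0, ⟨hc, -⟩ | ⟨hc, -⟩⟩ | ⟨hd, hp, hc⟩ | ⟨hd, hp, hc⟩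
  · rw [hc]; have := chi_lt S (S.idx u); omega
  · rw [hc]; have := chi_lt S (S.idx u - 1); omega
  · rw [hc]; exact col_lt_P S Δ hΔ hΔ2 hd
  · rw [hc]; exact col_lt_P S Δ hΔ hΔ2 hd

lemma cc_proper {u v w : V} (huv : G.Adj u v) (huw : G.Adj u w) (hne : v ≠ w) :
    cc S Δ s(u,v) ≠ cc S Δ s(u,w) := by
  rcases edge_val S Δ huv with ⟨h0, ⟨hc1, he1⟩ | ⟨hc1, he1⟩⟩ | ⟨hd1, hp1, hc1⟩ | ⟨hd1, hp1, hc1⟩ <;>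
  rcases edge_val S Δ huw with ⟨h0', ⟨hc2, he2⟩ | ⟨hc2, he2⟩⟩ | ⟨hd2, hp2, hc2⟩ | ⟨hd2, hp2, hc2⟩
  -- (C+, C+)
  · exact absurd (he1.trans he2.symm) hne
  -- (C+, C-)
  · rw [hc1, hc2]
    intro hcc
    have := chi_ne_succ S (S.idx u - 1)
    rw [show S.idx u - 1 + 1 = S.idx u by ring] at this
    exact this (hcc.symm)
  -- (C+, par) : d u = 0 and 1 ≤ d u
  · omega
  -- (C+, child)
  · rw [hc1, hc2]
    intro hcc
    have hn4 := col_notin_near4 S Δ hΔ hΔ2 hd2 (by rw [hp2]; exact h0)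
    rw [hp2] at hn4
    exact hn4 (hcc ▸ chi_idx_mem_near4 S u)
  -- (C-, C+)
  · rw [hc1, hc2]
    intro hcc
    have := chi_ne_succ S (S.idx u - 1)
    rw [show S.idx u - 1 + 1 = S.idx u by ring] at this
    exact this hcc
  -- (C-, C-)
  · exact absurd (he1.trans he2.symm) hne
  -- (C-, par)
  · omega
  -- (C-, child)
  · rw [hc1, hc2]
    intro hcc
    have hn4 := col_notin_near4 S Δ hΔ hΔ2 hd2 (by rw [hp2]; exact h0)
    rw [hp2] at hn4
    exact hn4 (hcc ▸ chi_idxm1_mem_near4 S u)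
  -- (par, C+)
  · omega
  -- (par, C-)
  · omega
  -- (par, par)
  · exact absurd (hp1.symm.trans hp2) hne
  -- (par, child)
  · rw [hc1, hc2]
    intro hcc
    have := col_notin_forb S Δ hΔ hΔ2 hd2 (by rw [hp2]; exact hd1)
    rw [hp2] at this
    exact this (hcc ▸ col_self_mem_forb S Δ u)
  -- (child, C+)
  · rw [hc1, hc2]
    intro hcc
    have hn4 := col_notin_near4 S Δ hΔ hΔ2 hd1 (by rw [hp1]; exact h0')
    rw [hp1] at hn4
    exact hn4 (hcc.symm ▸ chi_idx_mem_near4 S u)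
  -- (child, C-)
  · rw [hc1, hc2]
    intro hcc
    have hn4 := col_notin_near4 S Δ hΔ hΔ2 hd1 (by rw [hp1]; exact h0')
    rw [hp1] at hn4
    exact hn4 (hcc.symm ▸ chi_idxm1_mem_near4 S u)
  -- (child, par)
  · rw [hc1, hc2]
    intro hcc
    have := col_notin_forb S Δ hΔ hΔ2 hd1 (by rw [hp1]; exact hd2)
    rw [hp1] at this
    exact this (hcc.symm ▸ col_self_mem_forb S Δ u)
  -- (child, child)
  · rw [hc1, hc2]
    exact col_sib_ne S Δ hΔ hΔ2 hd1 hd2 (hp1.trans hp2.symm) hne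

lemma star_aux {v0 v1 v2 v3 v4 : V} (h01 : G.Adj v0 v1) (h12 : G.Adj v1 v2)
    (h23 : G.Adj v2 v3) (h34 : G.Adj v3 v4) (n13 : v1 ≠ v3) (n24 : v2 ≠ v4)
    (hd0 : 1 ≤ S.d v0) (hp0 : S.par v0 = v1) :
    ¬(cc S Δ s(v0,v1) = cc S Δ s(v2,v3) ∧ cc S Δ s(v1,v2) = cc S Δ s(v3,v4)) := by
  rintro ⟨hA, hB⟩
  have e0 : cc S Δ s(v0,v1) = col S Δ v0 := by rw [← hp0]; exact cc_eq_col S Δ hd0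
  rcases S.hclass v1 v2 h12 with ⟨i, h1i, h2i⟩ | ⟨i, h2i, h1i⟩ | ⟨hd1, hp1⟩ | ⟨hd2, hp2⟩
  · -- edge2 = C+
    have hdv1 : S.d v1 = 0 := by rw [h1i]; exact d_f S i
    have hcol0 : col S Δ v0 ∉ near4 S v1 := by
      have := col_notin_near4 S Δ hΔ hΔ2 hd0 (by rw [hp0]; exact hdv1)
      rwa [hp0] at this
    rcases S.hclass v2 v3 h23 with ⟨k, h2k, h3k⟩ | ⟨k, h3k, h2k⟩ | ⟨hd2', hp2'⟩ | ⟨hd3, hp3⟩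
    · -- C+ : UCC kill conjunct 1
      have hk : k = i + 1 := S.finj (h2k.symm.trans h2i)
      have hc23 : cc S Δ s(v2,v3) = chi S k := cc_eq_chi S Δ h2k h3k
      apply hcol0
      have hcc : col S Δ v0 = chi S (i+1) := by rw [← e0, hA, hc23, hk]
      rw [hcc, h1i]
      exact chi_mem_near4_plus S i
    · -- C- : backtrack
      have hk : k + 1 = i + 1 := S.finj (h2k.symm.trans h2i)
      have hk' : k = i := by
        have : k + 1 - 1 = i + 1 - 1 := by rw [hk]
        simpa using this
      exact n13 (by rw [h1i, h3k, hk'])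
    · -- U : impossible
      have : S.d v2 = 0 := by rw [h2i]; exact d_f S (i+1)
      omega
    · -- D : UCD, kill conjunct 2
      have hc12 : cc S Δ s(v1,v2) = chi S i := cc_eq_chi S Δ h1i h2i
      have hdv2 : S.d v2 = 0 := by rw [h2i]; exact d_f S (i+1)
      rcases S.hclass v3 v4 h34 with ⟨l, h3l, h4l⟩ | ⟨l, h4l, h3l⟩ | ⟨hd3', hp3'⟩ | ⟨hd4, hp4⟩
      · have : S.d v3 = 0 := by rw [h3l]; exact d_f S l
        omega
      · have : S.d v3 = 0 := by rw [h3l]; exact d_f S (l+1)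
        omega
      · exact n24 (hp3.symm.trans hp3')
      · have hc34 : cc S Δ s(v3,v4) = col S Δ v4 := by rw [← hp4]; exact cc_eq_col' S Δ hd4
        have hni : col S Δ v4 ∉ Forb S Δ v3 := by
          have := col_notin_forb S Δ hΔ hΔ2 hd4 (by rw [hp4]; exact hd3)
          rwa [hp4] at this
        apply hni
        have hcc : col S Δ v4 = chi S i := by rw [← hc34, ← hB, hc12]
        rw [hcc]
        apply ICC_subset_forb S Δ (by rw [hp3]; exact hdv2)
        rw [hp3, h2i]
        exact chi_mem_ICC_right S i
  · -- edge2 = C-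
    have hdv1 : S.d v1 = 0 := by rw [h1i]; exact d_f S (i+1)
    have hcol0 : col S Δ v0 ∉ near4 S v1 := by
      have := col_notin_near4 S Δ hΔ hΔ2 hd0 (by rw [hp0]; exact hdv1)
      rwa [hp0] at this
    rcases S.hclass v2 v3 h23 with ⟨k, h2k, h3k⟩ | ⟨k, h3k, h2k⟩ | ⟨hd2', hp2'⟩ | ⟨hd3, hp3⟩
    · -- C+ : backtrack
      have hk : k = i := S.finj (h2k.symm.trans h2i)
      exact n13 (by rw [h1i, h3k, hk])
    · -- C- : UCC kill conjunct 1
      have hk : k + 1 = i := S.finj (h2k.symm.trans h2i)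
      have hk' : k = i - 1 := by rw [← hk]; ring
      have hc23 : cc S Δ s(v2,v3) = chi S k := cc_eq_chi' S Δ h3k h2k
      apply hcol0
      have hcc : col S Δ v0 = chi S (i-1) := by rw [← e0, hA, hc23, hk']
      rw [hcc, h1i]
      have := chi_mem_near4_minus S (i+1)
      rwa [show i + 1 - 2 = i - 1 by ring] at this
    · -- U : impossible
      have : S.d v2 = 0 := by rw [h2i]; exact d_f S i
      omega
    · -- D : UCD, kill conjunct 2
      have hc12 : cc S Δ s(v1,v2) = chi S i := cc_eq_chi' S Δ h2i h1i
      have hdv2 : S.d v2 = 0 := by rw [h2i]; exact d_f S i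
      rcases S.hclass v3 v4 h34 with ⟨l, h3l, h4l⟩ | ⟨l, h4l, h3l⟩ | ⟨hd3', hp3'⟩ | ⟨hd4, hp4⟩
      · have : S.d v3 = 0 := by rw [h3l]; exact d_f S l
        omega
      · have : S.d v3 = 0 := by rw [h3l]; exact d_f S (l+1)
        omega
      · exact n24 (hp3.symm.trans hp3')
      · have hc34 : cc S Δ s(v3,v4) = col S Δ v4 := by rw [← hp4]; exact cc_eq_col' S Δ hd4
        have hni : col S Δ v4 ∉ Forb S Δ v3 := by
          have := col_notin_forb S Δ hΔ hΔ2 hd4 (by rw [hp4]; exact hd3)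
          rwa [hp4] at this
        apply hni
        have hcc : col S Δ v4 = chi S i := by rw [← hc34, ← hB, hc12]
        rw [hcc]
        apply ICC_subset_forb S Δ (by rw [hp3]; exact hdv2)
        rw [hp3, h2i]
        exact chi_mem_ICC_left S i
  · -- edge2 = U
    have hnf0 : col S Δ v0 ∉ Forb S Δ v1 := by
      have := col_notin_forb S Δ hΔ hΔ2 hd0 (by rw [hp0]; exact hd1)
      rwa [hp0] at this
    rcases S.hclass v2 v3 h23 with ⟨k, h2k, h3k⟩ | ⟨k, h3k, h2k⟩ | ⟨hd2', hp2'⟩ | ⟨hd3, hp3⟩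
    · -- C+ : UUC kill conjunct 1
      have hdv2 : S.d v2 = 0 := by rw [h2k]; exact d_f S k
      have hc23 : cc S Δ s(v2,v3) = chi S k := cc_eq_chi S Δ h2k h3k
      apply hnf0
      have hcc : col S Δ v0 = chi S k := by rw [← e0, hA, hc23]
      rw [hcc]
      apply ICC_subset_forb S Δ (by rw [hp1]; exact hdv2)
      rw [hp1, h2k]
      exact chi_mem_ICC_left S k
    · -- C- : UUC kill conjunct 1
      have hdv2 : S.d v2 = 0 := by rw [h2k]; exact d_f S (k+1)
      have hc23 : cc S Δ s(v2,v3) = chi S k := cc_eq_chi' S Δ h3k h2k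
      apply hnf0
      have hcc : col S Δ v0 = chi S k := by rw [← e0, hA, hc23]
      rw [hcc]
      apply ICC_subset_forb S Δ (by rw [hp1]; exact hdv2)
      rw [hp1, h2k]
      exact chi_mem_ICC_right S k
    · -- U : UUU kill conjunct 1 (grandparent)
      have hc23 : cc S Δ s(v2,v3) = col S Δ v2 := by rw [← hp2']; exact cc_eq_col S Δ hd2'
      apply hnf0
      have hcc : col S Δ v0 = col S Δ v2 := by rw [← e0, hA, hc23]
      rw [hcc]
      have := col_par_mem_forb S Δ (u := v1) (by rw [hp1]; exact hd2')
      rwa [hp1] at this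
    · -- D : UUD sibling case
      have hm1 : v1 ∈ children S v2 := by
        rw [mem_children]
        refine ⟨hp1, ?_, h12⟩
        have := S.hpd v1 hd1
        rw [hp1] at this
        omega
      have hm3 : v3 ∈ children S v2 := by
        rw [mem_children]
        refine ⟨hp3, ?_, h23.symm⟩
        have := S.hpd v3 hd3
        rw [hp3] at this
        omega
      have hc23 : cc S Δ s(v2,v3) = col S Δ v3 := by rw [← hp3]; exact cc_eq_col' S Δ hd3
      rcases beaten_cover S hm1 hm3 n13 with hb | hb
      · apply hnf0
        have hcc : col S Δ v0 = col S Δ v3 := by rw [← e0, hA, hc23]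
        rw [hcc]
        exact col_beaten_mem_forb S Δ hb
      · have hc12 : cc S Δ s(v1,v2) = col S Δ v1 := by rw [← hp1]; exact cc_eq_col S Δ hd1
        rcases S.hclass v3 v4 h34 with ⟨l, h3l, h4l⟩ | ⟨l, h4l, h3l⟩ | ⟨hd3', hp3'⟩ | ⟨hd4, hp4⟩
        · have : S.d v3 = 0 := by rw [h3l]; exact d_f S l
          omega
        · have : S.d v3 = 0 := by rw [h3l]; exact d_f S (l+1)
          omega
        · exact n24 (hp3.symm.trans hp3')
        · have hc34 : cc S Δ s(v3,v4) = col S Δ v4 := by rw [← hp4]; exact cc_eq_col' S Δ hd4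
          have hni : col S Δ v4 ∉ Forb S Δ v3 := by
            have := col_notin_forb S Δ hΔ hΔ2 hd4 (by rw [hp4]; exact hd3)
            rwa [hp4] at this
          apply hni
          have hcc : col S Δ v4 = col S Δ v1 := by rw [← hc34, ← hB, hc12]
          rw [hcc]
          exact col_beaten_mem_forb S Δ hb
  · -- edge2 = D
    rcases S.hclass v2 v3 h23 with ⟨k, h2k, h3k⟩ | ⟨k, h3k, h2k⟩ | ⟨hd2', hp2'⟩ | ⟨hd3, hp3⟩
    · have : S.d v2 = 0 := by rw [h2k]; exact d_f S k
      omega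
    · have : S.d v2 = 0 := by rw [h2k]; exact d_f S (k+1)
      omega
    · exact n13 (hp2.symm.trans hp2')
    · rcases S.hclass v3 v4 h34 with ⟨l, h3l, h4l⟩ | ⟨l, h4l, h3l⟩ | ⟨hd3', hp3'⟩ | ⟨hd4, hp4⟩
      · have : S.d v3 = 0 := by rw [h3l]; exact d_f S l
        omega
      · have : S.d v3 = 0 := by rw [h3l]; exact d_f S (l+1)
        omega
      · exact n24 (hp3.symm.trans hp3')
      · -- UDDD kill conjunct 2
        have hc12 : cc S Δ s(v1,v2) = col S Δ v2 := by rw [← hp2]; exact cc_eq_col' S Δ hd2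
        have hc34 : cc S Δ s(v3,v4) = col S Δ v4 := by rw [← hp4]; exact cc_eq_col' S Δ hd4
        have hni : col S Δ v4 ∉ Forb S Δ v3 := by
          have := col_notin_forb S Δ hΔ hΔ2 hd4 (by rw [hp4]; exact hd3)
          rwa [hp4] at this
        apply hni
        have hcc : col S Δ v4 = col S Δ v2 := by rw [← hc34, ← hB, hc12]
        rw [hcc]
        have := col_par_mem_forb S Δ (u := v3) (by rw [hp3]; exact hd2)
        rwa [hp3] at this

end Verify

lemma cc_swap (a b : V) : cc S Δ s(a,b) = cc S Δ s(b,a) := by rw [Sym2.eq_swap]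

lemma chi_add_k (i : ZMod S.n) (k : ℕ) (j : ZMod S.n) (hj : j = i + (k : ZMod S.n)) :
    chi S j = chiN S.n ((i.val + k) % S.n) := by
  rw [hj, chi_succ_val]

lemma star_auxC {v0 v1 v2 v3 v4 : V} (i : ZMod S.n)
    (e0 : v0 = S.f i) (e1 : v1 = S.f (i+1)) (e2 : v2 = S.f (i+2))
    (e3 : v3 = S.f (i+3)) (e4 : v4 = S.f (i+4)) (n03 : v0 ≠ v3) :
    ¬(cc S Δ s(v0,v1) = cc S Δ s(v2,v3) ∧ cc S Δ s(v1,v2) = cc S Δ s(v3,v4)) := by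
  have c2 : ((2:ℕ) : ZMod S.n) = (2 : ZMod S.n) := by push_cast; ring
  have c3 : ((3:ℕ) : ZMod S.n) = (3 : ZMod S.n) := by push_cast; ring
  have c4 : ((4:ℕ) : ZMod S.n) = (4 : ZMod S.n) := by push_cast; ring
  have c1 : ((1:ℕ) : ZMod S.n) = (1 : ZMod S.n) := by push_cast; ring
  have hn4 : 4 ≤ S.n := by
    by_contra h
    have hn3 : S.n = 3 := by have := S.hn; omega
    have h3z : (3 : ZMod S.n) = 0 := by
      rw [← c3, ZMod.natCast_eq_zero_iff]
      rw [hn3]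
    exact n03 (by rw [e0, e3, show i + 3 = i by rw [h3z, add_zero]])
  have hc01 : cc S Δ s(v0,v1) = chi S i := cc_eq_chi S Δ e0 e1
  have hc12 : cc S Δ s(v1,v2) = chi S (i+1) :=
    cc_eq_chi S Δ e1 (by rw [e2]; congr 1; ring)
  have hc23 : cc S Δ s(v2,v3) = chi S (i+2) :=
    cc_eq_chi S Δ e2 (by rw [e3]; congr 1; ring)
  have hc34 : cc S Δ s(v3,v4) = chi S (i+3) :=
    cc_eq_chi S Δ e3 (by rw [e4]; congr 1; ring)
  rintro ⟨hA, hB⟩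
  apply chiN_star S.n i.val hn4 (ZMod.val_lt i)
  constructor
  · rw [← chi_add_k S i 2 (i+2) (by rw [c2])]
    have : chi S i = chiN S.n i.val := rfl
    rw [← this, ← hc01, ← hc23, hA]
  · rw [← chi_add_k S i 1 (i+1) (by rw [c1]), ← chi_add_k S i 3 (i+3) (by rw [c3]),
      ← hc12, ← hc34, hB]

section Verify2
variable (hΔ : ∀ (s : Finset V) (v : V), (∀ x ∈ s, G.Adj v x) → s.card ≤ Δ) (hΔ2 : 2 ≤ Δ)
include hΔ hΔ2

lemma star5 {v0 v1 v2 v3 v4 : V} (h01 : G.Adj v0 v1) (h12 : G.Adj v1 v2)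
    (h23 : G.Adj v2 v3) (h34 : G.Adj v3 v4)
    (n02 : v0 ≠ v2) (n13 : v1 ≠ v3) (n24 : v2 ≠ v4) (n03 : v0 ≠ v3) (n14 : v1 ≠ v4) :
    ¬(cc S Δ s(v0,v1) = cc S Δ s(v2,v3) ∧ cc S Δ s(v1,v2) = cc S Δ s(v3,v4)) := by
  have hrev : 1 ≤ S.d v4 → S.par v4 = v3 →
      ¬(cc S Δ s(v0,v1) = cc S Δ s(v2,v3) ∧ cc S Δ s(v1,v2) = cc S Δ s(v3,v4)) := by
    rintro hd4 hp4 ⟨hA, hB⟩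
    apply star_aux S Δ hΔ hΔ2 h34.symm h23.symm h12.symm h01.symm n13.symm n02.symm hd4 hp4
    constructor
    · rw [cc_swap S Δ v4 v3, cc_swap S Δ v2 v1]
      exact hB.symm
    · rw [cc_swap S Δ v3 v2, cc_swap S Δ v1 v0]
      exact hA.symm
  rcases S.hclass v0 v1 h01 with ⟨i, h0i, h1i⟩ | ⟨i, h1i, h0i⟩ | ⟨hd0, hp0⟩ | ⟨hd1, hp1⟩
  · -- edge1 = C+
    rcases S.hclass v1 v2 h12 with ⟨j, h1j, h2j⟩ | ⟨j, h2j, h1j⟩ | ⟨hd1', hp1'⟩ | ⟨hd2, hp2⟩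
    · -- C+ C+
      have hj : j = i + 1 := S.finj (h1j.symm.trans h1i)
      have e2 : v2 = S.f (i+2) := by rw [h2j, hj]; congr 1; ring
      rcases S.hclass v2 v3 h23 with ⟨k, h2k, h3k⟩ | ⟨k, h3k, h2k⟩ | ⟨hd2', hp2'⟩ | ⟨hd3, hp3⟩
      · -- C+C+C+
        have hk : k = i + 2 := S.finj (h2k.symm.trans e2)
        have e3 : v3 = S.f (i+3) := by rw [h3k, hk]; congr 1; ring
        rcases S.hclass v3 v4 h34 with ⟨l, h3l, h4l⟩ | ⟨l, h4l, h3l⟩ | ⟨hd3', hp3'⟩ | ⟨hd4, hp4⟩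
        · -- C+C+C+C+ : pure cycle
          have hl : l = i + 3 := S.finj (h3l.symm.trans e3)
          have e4 : v4 = S.f (i+4) := by rw [h4l, hl]; congr 1; ring
          exact star_auxC S Δ i h0i h1i e2 e3 e4 n03
        · -- backtrack
          have hl : l + 1 = i + 3 := S.finj (h3l.symm.trans e3)
          have hl' : l = i + 2 := by linear_combination hl
          exact fun _ => n24 (by rw [e2, h4l, hl'])
        · have : S.d v3 = 0 := by rw [e3]; exact d_f S (i+3)
          omega
        · exact hrev hd4 hp4
      · -- backtrack : v3 = v1
        have hk : k + 1 = i + 2 := S.finj (h2k.symm.trans e2)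
        have hk' : k = i + 1 := by linear_combination hk
        exact fun _ => n13 (by rw [h1i, h3k, hk'])
      · have : S.d v2 = 0 := by rw [e2]; exact d_f S (i+2)
        omega
      · -- C+C+D : then edge4 must be D
        rcases S.hclass v3 v4 h34 with ⟨l, h3l, h4l⟩ | ⟨l, h4l, h3l⟩ | ⟨hd3', hp3'⟩ | ⟨hd4, hp4⟩
        · have : S.d v3 = 0 := by rw [h3l]; exact d_f S l
          omega
        · have : S.d v3 = 0 := by rw [h3l]; exact d_f S (l+1)
          omega
        · exact fun _ => n24 (hp3.symm.trans hp3')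
        · exact hrev hd4 hp4
    · -- C+ C- : backtrack v2 = v0
      have hj : j = i := by
        have h := S.finj (h1j.symm.trans h1i)
        linear_combination h
      exact fun _ => n02 (by rw [h0i, h2j, hj])
    · -- U impossible
      have : S.d v1 = 0 := by rw [h1i]; exact d_f S (i+1)
      omega
    · -- C+ D : chain down
      rcases S.hclass v2 v3 h23 with ⟨k, h2k, h3k⟩ | ⟨k, h3k, h2k⟩ | ⟨hd2', hp2'⟩ | ⟨hd3, hp3⟩
      · have : S.d v2 = 0 := by rw [h2k]; exact d_f S k
        omega
      · have : S.d v2 = 0 := by rw [h2k]; exact d_f S (k+1)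
        omega
      · exact fun _ => n13 (hp2.symm.trans hp2')
      · rcases S.hclass v3 v4 h34 with ⟨l, h3l, h4l⟩ | ⟨l, h4l, h3l⟩ | ⟨hd3', hp3'⟩ | ⟨hd4, hp4⟩
        · have : S.d v3 = 0 := by rw [h3l]; exact d_f S l
          omega
        · have : S.d v3 = 0 := by rw [h3l]; exact d_f S (l+1)
          omega
        · exact fun _ => n24 (hp3.symm.trans hp3')
        · exact hrev hd4 hp4
  · -- edge1 = C-  (v1 = f i, v0 = f (i+1))
    rcases S.hclass v1 v2 h12 with ⟨j, h1j, h2j⟩ | ⟨j, h2j, h1j⟩ | ⟨hd1', hp1'⟩ | ⟨hd2, hp2⟩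
    · -- backtrack v2 = v0
      have hj : j = i := S.finj (h1j.symm.trans h1i)
      exact fun _ => n02 (by rw [h0i, h2j, hj])
    · -- C- C-
      have hj : j = i - 1 := by
        have h := S.finj (h1j.symm.trans h1i)
        linear_combination h
      have e2 : v2 = S.f (i-1) := by rw [h2j, hj]
      rcases S.hclass v2 v3 h23 with ⟨k, h2k, h3k⟩ | ⟨k, h3k, h2k⟩ | ⟨hd2', hp2'⟩ | ⟨hd3, hp3⟩
      · -- backtrack v3 = v1
        have hk : k = i - 1 := S.finj (h2k.symm.trans e2)
        exact fun _ => n13 (by rw [h1i, h3k, hk, show i - 1 + 1 = i by ring])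
      · -- C- C- C-
        have hk : k = i - 2 := by
          have h := S.finj (h2k.symm.trans e2)
          linear_combination h
        have e3 : v3 = S.f (i-2) := by rw [h3k, hk]
        rcases S.hclass v3 v4 h34 with ⟨l, h3l, h4l⟩ | ⟨l, h4l, h3l⟩ | ⟨hd3', hp3'⟩ | ⟨hd4, hp4⟩
        · -- backtrack v4 = v2
          have hl : l = i - 2 := S.finj (h3l.symm.trans e3)
          exact fun _ => n24 (by rw [e2, h4l, hl, show i - 2 + 1 = i - 1 by ring])
        · -- all minus: reversed pure cycle
          have hl : l = i - 3 := by
            have h := S.finj (h3l.symm.trans e3)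
            linear_combination h
          have e4 : v4 = S.f (i-3) := by rw [h4l, hl]
          have f3 : v3 = S.f (i-3+1) := by rw [e3]; congr 1; ring
          have f2 : v2 = S.f (i-3+2) := by rw [e2]; congr 1; ring
          have f1 : v1 = S.f (i-3+3) := by rw [h1i]; congr 1; ring
          have f0 : v0 = S.f (i-3+4) := by rw [h0i]; congr 1; ring
          rintro ⟨hA, hB⟩
          apply star_auxC S Δ (i-3) e4 f3 f2 f1 f0 n14.symm
          constructor
          · rw [cc_swap S Δ v4 v3, cc_swap S Δ v2 v1]
            exact hB.symm
          · rw [cc_swap S Δ v3 v2, cc_swap S Δ v1 v0]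
            exact hA.symm
        · have : S.d v3 = 0 := by rw [e3]; exact d_f S (i-2)
          omega
        · exact hrev hd4 hp4
      · have : S.d v2 = 0 := by rw [e2]; exact d_f S (i-1)
        omega
      · -- C- D : chain down
        rcases S.hclass v3 v4 h34 with ⟨l, h3l, h4l⟩ | ⟨l, h4l, h3l⟩ | ⟨hd3', hp3'⟩ | ⟨hd4, hp4⟩
        · have : S.d v3 = 0 := by rw [h3l]; exact d_f S l
          omega
        · have : S.d v3 = 0 := by rw [h3l]; exact d_f S (l+1)
          omega
        · exact fun _ => n24 (hp3.symm.trans hp3')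
        · exact hrev hd4 hp4
    · -- U impossible
      have : S.d v1 = 0 := by rw [h1i]; exact d_f S i
      omega
    · -- C- D : chain down
      rcases S.hclass v2 v3 h23 with ⟨k, h2k, h3k⟩ | ⟨k, h3k, h2k⟩ | ⟨hd2', hp2'⟩ | ⟨hd3, hp3⟩
      · have : S.d v2 = 0 := by rw [h2k]; exact d_f S k
        omega
      · have : S.d v2 = 0 := by rw [h2k]; exact d_f S (k+1)
        omega
      · exact fun _ => n13 (hp2.symm.trans hp2')
      · rcases S.hclass v3 v4 h34 with ⟨l, h3l, h4l⟩ | ⟨l, h4l, h3l⟩ | ⟨hd3', hp3'⟩ | ⟨hd4, hp4⟩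
        · have : S.d v3 = 0 := by rw [h3l]; exact d_f S l
          omega
        · have : S.d v3 = 0 := by rw [h3l]; exact d_f S (l+1)
          omega
        · exact fun _ => n24 (hp3.symm.trans hp3')
        · exact hrev hd4 hp4
  · -- edge1 = U : direct
    exact star_aux S Δ hΔ hΔ2 h01 h12 h23 h34 n13 n24 hd0 hp0
  · -- edge1 = D : chain down
    rcases S.hclass v1 v2 h12 with ⟨j, h1j, h2j⟩ | ⟨j, h2j, h1j⟩ | ⟨hd1', hp1'⟩ | ⟨hd2, hp2⟩
    · have : S.d v1 = 0 := by rw [h1j]; exact d_f S j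
      omega
    · have : S.d v1 = 0 := by rw [h1j]; exact d_f S (j+1)
      omega
    · exact fun _ => n02 (hp1.symm.trans hp1')
    · rcases S.hclass v2 v3 h23 with ⟨k, h2k, h3k⟩ | ⟨k, h3k, h2k⟩ | ⟨hd2', hp2'⟩ | ⟨hd3, hp3⟩
      · have : S.d v2 = 0 := by rw [h2k]; exact d_f S k
        omega
      · have : S.d v2 = 0 := by rw [h2k]; exact d_f S (k+1)
        omega
      · exact fun _ => n13 (hp2.symm.trans hp2')
      · rcases S.hclass v3 v4 h34 with ⟨l, h3l, h4l⟩ | ⟨l, h4l, h3l⟩ | ⟨hd3', hp3'⟩ | ⟨hd4, hp4⟩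
        · have : S.d v3 = 0 := by rw [h3l]; exact d_f S l
          omega
        · have : S.d v3 = 0 := by rw [h3l]; exact d_f S (l+1)
          omega
        · exact fun _ => n24 (hp3.symm.trans hp3')
        · exact hrev hd4 hp4

end Verify2
end
end UC

/-- If `G` is unicyclic with maximum degree `Δ`, then `χ'ₛ(G) ≤ ⌊3Δ/2⌋ + 1`. -/
theorem starChromaticIndex_unicyclic_le {V : Type*} [Fintype V] (G : SimpleGraph V)
    [DecidableRel G.Adj] (Δ : ℕ) (hΔ : ∀ v : V, G.degree v ≤ Δ)
    (hG : IsUnicyclic G) :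
    starChromaticIndex G ≤ 3 * Δ / 2 + 1 := by
  classical
  obtain ⟨S⟩ := exists_usetup G hG
  have hdeg : ∀ (s : Finset V) (v : V), (∀ x ∈ s, G.Adj v x) → s.card ≤ Δ := by
    intro s v hs
    have hsub : s ⊆ G.neighborFinset v := by
      intro x hx
      rw [SimpleGraph.mem_neighborFinset]
      exact hs x hx
    have := Finset.card_le_card hsub
    rw [SimpleGraph.card_neighborFinset_eq_degree] at this
    exact le_trans this (hΔ v)
  have hΔ2 : 2 ≤ Δ := by
    have h1 : G.Adj (S.f 0) (S.f 1) := by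
      have := S.hadj 0
      rwa [zero_add] at this
    have h2 : G.Adj (S.f 0) (S.f (-1)) := by
      have := S.hadj (-1)
      rw [show (-1 : ZMod S.n) + 1 = 0 by ring] at this
      exact this.symm
    have hne : S.f 1 ≠ S.f (-1) := by
      intro h
      have h' := S.finj h
      exact UC.two_ne_zero' S (by linear_combination h')
    have hsub : ({S.f 1, S.f (-1)} : Finset V) ⊆ G.neighborFinset (S.f 0) := by
      intro x hx
      rw [Finset.mem_insert, Finset.mem_singleton] at hx
      rcases hx with rfl | rfl
      · rw [SimpleGraph.mem_neighborFinset]; exact h1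
      · rw [SimpleGraph.mem_neighborFinset]; exact h2
    have hcard := Finset.card_le_card hsub
    rw [Finset.card_pair hne, SimpleGraph.card_neighborFinset_eq_degree] at hcard
    exact le_trans hcard (hΔ _)
  have hmem : StarColorable G (3*Δ/2+1) := by
    refine ⟨UC.cc S Δ, ?_, ?_, ?_⟩
    · intro u v h
      exact UC.cc_lt_P S Δ hdeg hΔ2 h
    · intro u v w huv huw hne
      exact UC.cc_proper S Δ hdeg hΔ2 huv huw hne
    · intro v0 v1 v2 v3 v4 h01 h12 h23 h34 n01 n02 n03 n12 n13 n23 n41 n42 n43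
      exact UC.star5 S Δ hdeg hΔ2 h01 h12 h23 h34 n02 n13 (fun h => n42 h.symm) n03
        (fun h => n41 h.symm)
  exact Nat.sInf_le hmem
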